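/- Let a₁, a₂, a₃ be a basis of ℝ³ with V_r = a₁ · (a₂ × a₃), and let b₁, …, b_{2N} be an exchange drive all of whose steps lie in the lattice ℤa₁ + ℤa₂ + ℤa₃. Then the characteristic vector G = (2π/V_r) Σ_{n=1}^{2N−1} (−1)ⁿ (d_n × b_{n+1}) satisfies G · a_k ∈ 2πℤ for k = 1, 2, 3; that is, G is a vector of the reciprocal lattice. -/

import Mathlib

open Matrix Finset

infixl:74 " ×₃ " => crossProduct

/-- The displacement vector after `n` steps of a 3D exchange drive:
`d_n = Σ_{k=1}^{n} (−1)^{k+1} b_k`. -/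
noncomputable def disp3 (b : ℕ → Fin 3 → ℝ) (n : ℕ) : Fin 3 → ℝ :=
  ∑ k ∈ Finset.Icc 1 n, (-1 : ℝ) ^ (k + 1) • b k

/-- The characteristic sum `S(b) = Σ_{n=1}^{2N−1} (−1)ⁿ (d_n × b_{n+1})` of a 3D
exchange drive of length `2N`. -/
noncomputable def charSum (N : ℕ) (b : ℕ → Fin 3 → ℝ) : Fin 3 → ℝ :=
  ∑ n ∈ Finset.Icc 1 (2 * N - 1), (-1 : ℝ) ^ n • ((disp3 b n) ×₃ (b (n + 1)))

private lemma cross_dot_lattice (a₁ a₂ a₃ x y : Fin 3 → ℝ)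
    (hx : ∃ p q r : ℤ, x = (p : ℝ) • a₁ + (q : ℝ) • a₂ + (r : ℝ) • a₃)
    (hy : ∃ p q r : ℤ, y = (p : ℝ) • a₁ + (q : ℝ) • a₂ + (r : ℝ) • a₃)
    (a : Fin 3 → ℝ) (ha : a ∈ ({a₁, a₂, a₃} : Set (Fin 3 → ℝ))) :
    ∃ z : ℤ, (x ×₃ y) ⬝ᵥ a = (z : ℝ) * (a₁ ⬝ᵥ (a₂ ×₃ a₃)) := by
  obtain ⟨p1, p2, p3, rfl⟩ := hx
  obtain ⟨q1, q2, q3, rfl⟩ := hy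
  rcases ha with rfl | rfl | rfl
  · exact ⟨p2 * q3 - p3 * q2, by
      simp only [crossProduct, dotProduct, Fin.sum_univ_three, Pi.add_apply, Pi.smul_apply,
        smul_eq_mul, LinearMap.mk₂_apply, Matrix.cons_val_zero, Matrix.cons_val_one,
        Matrix.head_cons, Matrix.cons_val_two, Matrix.tail_cons]
      push_cast
      ring⟩
  · exact ⟨p3 * q1 - p1 * q3, by
      simp only [crossProduct, dotProduct, Fin.sum_univ_three, Pi.add_apply, Pi.smul_apply,
        smul_eq_mul, LinearMap.mk₂_apply, Matrix.cons_val_zero, Matrix.cons_val_one,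
        Matrix.head_cons, Matrix.cons_val_two, Matrix.tail_cons]
      push_cast
      ring⟩
  · exact ⟨p1 * q2 - p2 * q1, by
      simp only [crossProduct, dotProduct, Fin.sum_univ_three, Pi.add_apply, Pi.smul_apply,
        smul_eq_mul, LinearMap.mk₂_apply, Matrix.cons_val_zero, Matrix.cons_val_one,
        Matrix.head_cons, Matrix.cons_val_two, Matrix.tail_cons]
      push_cast
      ring⟩

/-- For a basis `a₁, a₂, a₃` of `ℝ³` with `V_r = a₁ ⬝ᵥ (a₂ × a₃)`, and an
exchange drive `b₁, …, b_{2N}` all of whose steps lie in the lattice `ℤa₁ + ℤa₂ + ℤa₃`,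
the characteristic vector `G = (2π/V_r) Σ_{n=1}^{2N−1} (−1)ⁿ (d_n × b_{n+1})` satisfies
`G ⬝ᵥ a_k ∈ 2πℤ` for each `k = 1, 2, 3`: it is a vector of the reciprocal lattice. -/
theorem stmt_4 (a₁ a₂ a₃ : Fin 3 → ℝ)
    (hli : LinearIndependent ℝ ![a₁, a₂, a₃])
    (hsp : Submodule.span ℝ ({a₁, a₂, a₃} : Set (Fin 3 → ℝ)) = ⊤)
    (N : ℕ) (b : ℕ → Fin 3 → ℝ)
    (hlat : ∀ n, 1 ≤ n → n ≤ 2 * N →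
      ∃ p q r : ℤ, b n = (p : ℝ) • a₁ + (q : ℝ) • a₂ + (r : ℝ) • a₃) :
    ∀ a ∈ ({a₁, a₂, a₃} : Set (Fin 3 → ℝ)),
      ∃ m : ℤ,
        ((2 * Real.pi / (a₁ ⬝ᵥ (a₂ ×₃ a₃))) • charSum N b) ⬝ᵥ a
          = 2 * Real.pi * (m : ℝ) := by
  intro a ha
  set V : ℝ := a₁ ⬝ᵥ (a₂ ×₃ a₃) with hV
  -- V ≠ 0
  have hVd : V = Matrix.det ![a₁, a₂, a₃] := triple_product_eq_det a₁ a₂ a₃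
  have hVne : V ≠ 0 := by
    rw [hVd]
    have h2 : IsUnit (Matrix.of ![a₁, a₂, a₃]) :=
      Matrix.linearIndependent_rows_iff_isUnit.mp hli
    have := (Matrix.isUnit_iff_isUnit_det _).mp h2 |>.ne_zero
    exact this
  -- charSum ⬝ᵥ a = z * V for some integer z
  have key : ∃ z : ℤ, charSum N b ⬝ᵥ a = (z : ℝ) * V := by
    have hsum : ∀ (s : Finset ℕ) (f : ℕ → Fin 3 → ℝ),
        (∑ n ∈ s, f n) ⬝ᵥ a = ∑ n ∈ s, f n ⬝ᵥ a := by
      intro s f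
      induction s using Finset.cons_induction with
      | empty => simp [zero_dotProduct]
      | cons i s hi ih => rw [Finset.sum_cons, Finset.sum_cons, add_dotProduct, ih]
    rw [charSum, hsum]
    refine Finset.sum_induction _ (fun x => ∃ z : ℤ, x = (z : ℝ) * V) ?_ ⟨0, by simp⟩ ?_
    · rintro x y ⟨z1, rfl⟩ ⟨z2, rfl⟩
      exact ⟨z1 + z2, by push_cast; ring⟩
    · intro n hn
      rw [Finset.mem_Icc] at hn
      have hd : ∃ p q r : ℤ, disp3 b n = (p : ℝ) • a₁ + (q : ℝ) • a₂ + (r : ℝ) • a₃ := by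
        rw [disp3]
        refine Finset.sum_induction _
          (fun x => ∃ p q r : ℤ, x = (p : ℝ) • a₁ + (q : ℝ) • a₂ + (r : ℝ) • a₃)
          ?_ ⟨0, 0, 0, by simp⟩ ?_
        · rintro x y ⟨p1, q1, r1, rfl⟩ ⟨p2, q2, r2, rfl⟩
          exact ⟨p1 + p2, q1 + q2, r1 + r2, by push_cast; module⟩
        · intro k hk
          rw [Finset.mem_Icc] at hk
          obtain ⟨p, q, r, hb⟩ := hlat k hk.1 (by omega)
          refine ⟨(-1) ^ (k + 1) * p, (-1) ^ (k + 1) * q, (-1) ^ (k + 1) * r, ?_⟩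
          rw [hb]
          push_cast
          module
      have hb' : ∃ p q r : ℤ, b (n + 1) = (p : ℝ) • a₁ + (q : ℝ) • a₂ + (r : ℝ) • a₃ :=
        hlat (n + 1) (by omega) (by omega)
      obtain ⟨z, hz⟩ := cross_dot_lattice a₁ a₂ a₃ _ _ hd hb' a ha
      refine ⟨(-1) ^ n * z, ?_⟩
      rw [smul_dotProduct, hz, smul_eq_mul]
      push_cast
      ring
  obtain ⟨z, hz⟩ := key
  refine ⟨z, ?_⟩
  rw [smul_dotProduct, hz]
  field_simp
  rw [smul_eq_mul, show 2 * Real.pi / V * (V * ↑z) = (V * V⁻¹) * (2 * Real.pi * ↑z) by ring,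
    mul_inv_cancel₀ hVne, one_mul]
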